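/- In any finite hypergraph G = (V, E) with all edges non-empty, a vertex t belongs to some maximal independent set and is excluded from some other maximal independent set if and only if t is contained in some edge e with |e| ≥ 2 and {t} is not itself an edge; consequently, if {t} ∈ E then t belongs to no repair, and if t is in no edge then t belongs to every repair. -/
import Mathlib


variable {F : Type*} [DecidableEq F]

/-- M is a model of the disjunctive database D: it meets every disjunction. -/
def IsModel (D : Finset (Finset F)) (M : Finset F) : Prop :=
  ∀ d ∈ D, ∃ t ∈ d, t ∈ M

/-- M is a minimal model of D. -/
def IsMinModel (D : Finset (Finset F)) (M : Finset F) : Prop :=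
  IsModel D M ∧ ∀ M' ⊂ M, ¬ IsModel D M'

/-- reduction removes every disjunction properly containing another disjunction of D. -/
def reduction (D : Finset (Finset F)) : Finset (Finset F) :=
  D.filter (fun d => ∀ d' ∈ D, ¬ d' ⊂ d)

/-- S is independent (consistent): contains no edge. -/
def Independent (E : Finset (Finset F)) (S : Finset F) : Prop :=
  ∀ e ∈ E, ¬ e ⊆ S

/-- S is a repair: a maximal independent subset of V. -/
def IsRepair (V : Finset F) (E : Finset (Finset F)) (S : Finset F) : Prop :=
  S ⊆ V ∧ Independent E S ∧ ∀ S', S ⊂ S' → S' ⊆ V → ¬ Independent E S'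

lemma exists_repair_ext (V : Finset F) (E : Finset (Finset F))
    (S : Finset F) (hSV : S ⊆ V) (hS : Independent E S) :
    ∃ r : Finset F, IsRepair V E r ∧ S ⊆ r := by
  classical
  set P := V.powerset.filter (fun T => S ⊆ T ∧ Independent E T) with hP
  have hSP : S ∈ P := by
    simp only [hP, Finset.mem_filter, Finset.mem_powerset]
    exact ⟨hSV, Finset.Subset.refl S, hS⟩
  obtain ⟨r, hrP, hrmax⟩ := P.exists_max_image Finset.card ⟨S, hSP⟩
  simp only [hP, Finset.mem_filter, Finset.mem_powerset] at hrP
  refine ⟨r, ⟨hrP.1, hrP.2.2, ?_⟩, hrP.2.1⟩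
  intro S' hsub hS'V hS'ind
  have : S' ∈ P := by
    simp only [hP, Finset.mem_filter, Finset.mem_powerset]
    exact ⟨hS'V, hrP.2.1.trans hsub.subset, hS'ind⟩
  have := hrmax S' this
  have := Finset.card_lt_card hsub
  omega

theorem stmt19 (V : Finset F) (E : Finset (Finset F))
    (hE : ∀ e ∈ E, e.Nonempty ∧ e ⊆ V)
    (hmin : ∀ e ∈ E, ∀ e' ∈ E, e ⊆ e' → e = e') :
    ∀ t ∈ V,
      (((∃ r : Finset F, IsRepair V E r ∧ t ∈ r) ∧
        (∃ r : Finset F, IsRepair V E r ∧ t ∉ r))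
        ↔ ((∃ e ∈ E, t ∈ e ∧ 2 ≤ e.card) ∧ {t} ∉ E))
      ∧ ({t} ∈ E → ∀ r : Finset F, IsRepair V E r → t ∉ r)
      ∧ ((∀ e ∈ E, t ∉ e) → ∀ r : Finset F, IsRepair V E r → t ∈ r) := by
  intro t ht
  have h2 : {t} ∈ E → ∀ r : Finset F, IsRepair V E r → t ∉ r := by
    intro hsing r hr htr
    exact hr.2.1 {t} hsing (Finset.singleton_subset_iff.mpr htr)
  have h3 : (∀ e ∈ E, t ∉ e) → ∀ r : Finset F, IsRepair V E r → t ∈ r := by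
    intro hno r hr
    by_contra htr
    have hins : r ⊂ insert t r := Finset.ssubset_insert htr
    have hinsV : insert t r ⊆ V := Finset.insert_subset ht hr.1
    have := hr.2.2 (insert t r) hins hinsV
    apply this
    intro e he hes
    rcases Finset.subset_insert_iff_of_notMem (hno e he) |>.mp hes with h
    · exact hr.2.1 e he (by
        intro x hx
        have := hes hx
        rcases Finset.mem_insert.mp this with h' | h'
        · exact absurd (h' ▸ hx) (hno e he)
        · exact h')
  refine ⟨?_, h2, h3⟩
  constructor
  · rintro ⟨⟨r, hr, htr⟩, ⟨r', hr', htr'⟩⟩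
    have hsing : {t} ∉ E := fun h => h2 h r hr htr
    refine ⟨?_, hsing⟩
    have hins : r' ⊂ insert t r' := Finset.ssubset_insert htr'
    have hinsV : insert t r' ⊆ V := Finset.insert_subset ht hr'.1
    have hnotind := hr'.2.2 (insert t r') hins hinsV
    simp only [Independent, not_forall] at hnotind
    obtain ⟨e, he, hes⟩ := hnotind
    push_neg at hes
    have hes : e ⊆ insert t r' := not_not.mp (by simpa using hes)
    have hte : t ∈ e := by
      by_contra hte
      exact hr'.2.1 e he (fun x hx => by
        rcases Finset.mem_insert.mp (hes hx) with h' | h'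
        · exact absurd (h' ▸ hx) hte
        · exact h')
    refine ⟨e, he, hte, ?_⟩
    rcases (hE e he).1 with ⟨x, hx⟩
    by_contra hcard
    have : e.card = 1 := by
      have := Finset.card_pos.mpr ⟨x, hx⟩
      omega
    obtain ⟨y, hy⟩ := Finset.card_eq_one.mp this
    rw [hy] at hte
    rw [Finset.mem_singleton] at hte
    exact hsing (hte ▸ hy ▸ he)
  · rintro ⟨⟨e, he, hte, hcard⟩, hsing⟩
    constructor
    · have hind : Independent E {t} := by
        intro e' he' hsub
        rcases Finset.subset_singleton_iff.mp hsub with h | h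
        · exact (hE e' he').1.ne_empty h
        · exact hsing (h ▸ he')
      obtain ⟨r, hr, hsub⟩ := exists_repair_ext V E {t} (Finset.singleton_subset_iff.mpr ht) hind
      exact ⟨r, hr, hsub (Finset.mem_singleton_self t)⟩
    · have hind : Independent E (e.erase t) := by
        intro e' he' hsub
        have h1 : e' ⊆ e := hsub.trans (Finset.erase_subset t e)
        have := hmin e' he' e he h1
        rw [this] at hsub
        exact Finset.notMem_erase t e (hsub hte)
      obtain ⟨r, hr, hsub⟩ := exists_repair_ext V E (e.erase t)
        ((Finset.erase_subset t e).trans (hE e he).2) hind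
      refine ⟨r, hr, fun htr => ?_⟩
      apply hr.2.1 e he
      intro x hx
      by_cases hxt : x = t
      · exact hxt ▸ htr
      · exact hsub (Finset.mem_erase.mpr ⟨hxt, hx⟩)
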